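/- Let V be a unital associative 𝔽-algebra with pairwise strongly commuting 2-fold derivations D₁,…,D_ℓ (i.e., (D_i)_L ∘ D_j = (D_j)_R ∘ D_i as maps V → V^{⊗3} for all i,j). Let B_{ij} ∈ V⊗V for 1 ≤ i,j ≤ ℓ, and let {{f,g}} := Σ_{i,j=1}^{ℓ} (D_j g) • B_{ij} • (D_i f)^σ be the associated 2-fold bracket. Assume: (1) B_{ij} = −(B_{ji})^σ for all i,j; and (2) for all i,j,k: T_{ijk} + (T_{jki})^σ + (T_{kij})^{σ²} = 0 in V^{⊗3}, where T_{ijk} := Σ_{h=1}^{ℓ} ((D_h)_L B_{jk}) •₃ B_{ih}. Then {{−,−}} makes V a double Poisson algebra: {{f,g}} = −({{g,f}})^σ and {{f,{{g,h}}}}_L + ({{g,{{h,f}}}}_L)^σ + ({{h,{{f,g}}}}_L)^{σ²} = 0 for all f,g,h ∈ V. -/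

import Mathlib

open TensorProduct LinearMap

section DPA

variable (𝔽 : Type) [Field 𝔽] (V : Type) [Ring V] [Algebra 𝔽 V]

/-- The swap `(u ⊗ v)^σ = v ⊗ u` on `V ⊗ V`. -/
noncomputable abbrev swap2 : V ⊗[𝔽] V ≃ₗ[𝔽] V ⊗[𝔽] V := TensorProduct.comm 𝔽 V V

/-- The cyclic permutation `(u ⊗ v ⊗ w)^σ = w ⊗ u ⊗ v` on `V ⊗ V ⊗ V = (V ⊗ V) ⊗ V`. -/
noncomputable def sigma3 : (V ⊗[𝔽] V) ⊗[𝔽] V ≃ₗ[𝔽] (V ⊗[𝔽] V) ⊗[𝔽] V :=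
  (TensorProduct.comm 𝔽 (V ⊗[𝔽] V) V).trans (TensorProduct.assoc 𝔽 V V V).symm

/-- Left multiplication `a · (u ⊗ v) = (a*u) ⊗ v` (outer bimodule structure). -/
noncomputable def lact2 (a : V) : V ⊗[𝔽] V →ₗ[𝔽] V ⊗[𝔽] V :=
  LinearMap.rTensor V (LinearMap.mulLeft 𝔽 a)

/-- Right multiplication `(u ⊗ v) · c = u ⊗ (v*c)` (outer bimodule structure). -/
noncomputable def ract2 (c : V) : V ⊗[𝔽] V →ₗ[𝔽] V ⊗[𝔽] V :=
  LinearMap.lTensor V (LinearMap.mulRight 𝔽 c)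

/-- `(u ⊗ v) ⋆₁ b = (u*b) ⊗ v`. -/
noncomputable def star1r (b : V) : V ⊗[𝔽] V →ₗ[𝔽] V ⊗[𝔽] V :=
  LinearMap.rTensor V (LinearMap.mulRight 𝔽 b)

/-- `a ⋆₁ (u ⊗ v) = u ⊗ (a*v)`. -/
noncomputable def star1l (a : V) : V ⊗[𝔽] V →ₗ[𝔽] V ⊗[𝔽] V :=
  LinearMap.lTensor V (LinearMap.mulLeft 𝔽 a)

/-- The `•`-product on `V ⊗ V`:  `(u ⊗ v) • (x ⊗ y) = (u*x) ⊗ (y*v)`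
(the multiplication of `V ⊗ Vᵒᵖ`). -/
noncomputable def bullet : V ⊗[𝔽] V →ₗ[𝔽] V ⊗[𝔽] V →ₗ[𝔽] V ⊗[𝔽] V :=
  TensorProduct.lift
    (((TensorProduct.mapBilinear (RingHom.id 𝔽) V V V V).comp (LinearMap.mul 𝔽 V)).compl₂
      ((LinearMap.mul 𝔽 V).flip))

/-- A `2`-fold bracket on `V`: an `𝔽`-bilinear map `V × V → V ⊗ V` satisfying the two
Leibniz rules `{{a,bc}} = {{a,b}}·c + b·{{a,c}}` and `{{ab,c}} = {{a,c}} ⋆₁ b + a ⋆₁ {{b,c}}`. -/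
def IsDoubleBracket (Br : V →ₗ[𝔽] V →ₗ[𝔽] V ⊗[𝔽] V) : Prop :=
  (∀ a b c : V, Br a (b * c) = ract2 𝔽 V c (Br a b) + lact2 𝔽 V b (Br a c)) ∧
  (∀ a b c : V, Br (a * b) c = star1r 𝔽 V b (Br a c) + star1l 𝔽 V a (Br b c))

variable {𝔽 V}

/-- `{{a, B}}_L` : apply the bracket to the first tensor factor. -/
noncomputable def brL (Br : V →ₗ[𝔽] V →ₗ[𝔽] V ⊗[𝔽] V) (a : V) :
    V ⊗[𝔽] V →ₗ[𝔽] (V ⊗[𝔽] V) ⊗[𝔽] V :=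
  LinearMap.rTensor V (Br a)

/-- `{{a, B}}_R` : apply the bracket to the second tensor factor. -/
noncomputable def brR (Br : V →ₗ[𝔽] V →ₗ[𝔽] V ⊗[𝔽] V) (a : V) :
    V ⊗[𝔽] V →ₗ[𝔽] (V ⊗[𝔽] V) ⊗[𝔽] V :=
  (TensorProduct.assoc 𝔽 V V V).symm.toLinearMap ∘ₗ LinearMap.lTensor V (Br a)

variable (𝔽 V)

/-- `ρ₂` : swap the last two tensor factors of `V ⊗ V ⊗ V`. -/
noncomputable def rho2 : (V ⊗[𝔽] V) ⊗[𝔽] V ≃ₗ[𝔽] (V ⊗[𝔽] V) ⊗[𝔽] V :=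
  (TensorProduct.assoc 𝔽 V V V).trans
    ((TensorProduct.congr (LinearEquiv.refl 𝔽 V) (TensorProduct.comm 𝔽 V V)).trans
      (TensorProduct.assoc 𝔽 V V V).symm)

variable {𝔽 V}

/-- Conjugated bullet action used to define the actions `•ᵢ` of `V ⊗ V` on `V ⊗ V ⊗ V`. -/
noncomputable def conjAct (β : V ⊗[𝔽] V →ₗ[𝔽] V ⊗[𝔽] V →ₗ[𝔽] V ⊗[𝔽] V)
    (ρ : (V ⊗[𝔽] V) ⊗[𝔽] V ≃ₗ[𝔽] (V ⊗[𝔽] V) ⊗[𝔽] V) :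
    V ⊗[𝔽] V →ₗ[𝔽] (V ⊗[𝔽] V) ⊗[𝔽] V →ₗ[𝔽] (V ⊗[𝔽] V) ⊗[𝔽] V :=
  (LinearMap.lcomp 𝔽 _ ρ.toLinearMap) ∘ₗ
    (LinearMap.llcomp 𝔽 ((V ⊗[𝔽] V) ⊗[𝔽] V) ((V ⊗[𝔽] V) ⊗[𝔽] V) ((V ⊗[𝔽] V) ⊗[𝔽] V)
      ρ.symm.toLinearMap) ∘ₗ
    (LinearMap.rTensorHom V) ∘ₗ β

variable (𝔽 V)

/-- The right action `X •₁ A`, i.e. `(x⊗y⊗z) •₁ (a⊗b) = x⊗(y*a)⊗(b*z)`;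
`bAct1R A X = X •₁ A`. -/
noncomputable def bAct1R : V ⊗[𝔽] V →ₗ[𝔽] (V ⊗[𝔽] V) ⊗[𝔽] V →ₗ[𝔽] (V ⊗[𝔽] V) ⊗[𝔽] V :=
  conjAct (bullet 𝔽 V).flip ((sigma3 𝔽 V).trans (sigma3 𝔽 V))

/-- The left action `A •₂ X`, i.e. `(a⊗b) •₂ (x⊗y⊗z) = (a*x)⊗y⊗(z*b)`. -/
noncomputable def bAct2L : V ⊗[𝔽] V →ₗ[𝔽] (V ⊗[𝔽] V) ⊗[𝔽] V →ₗ[𝔽] (V ⊗[𝔽] V) ⊗[𝔽] V :=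
  conjAct (bullet 𝔽 V) (rho2 𝔽 V)

/-- The right action `X •₃ A`, i.e. `(x⊗y⊗z) •₃ (a⊗b) = (x*a)⊗(b*y)⊗z`;
`bAct3R A X = X •₃ A`. -/
noncomputable def bAct3R : V ⊗[𝔽] V →ₗ[𝔽] (V ⊗[𝔽] V) ⊗[𝔽] V →ₗ[𝔽] (V ⊗[𝔽] V) ⊗[𝔽] V :=
  conjAct (bullet 𝔽 V).flip (LinearEquiv.refl 𝔽 ((V ⊗[𝔽] V) ⊗[𝔽] V))

/-- `a ⋆₁ (x⊗y⊗z) = x⊗(a*y)⊗z`. -/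
noncomputable def slot2L (a : V) : (V ⊗[𝔽] V) ⊗[𝔽] V →ₗ[𝔽] (V ⊗[𝔽] V) ⊗[𝔽] V :=
  LinearMap.rTensor V (LinearMap.lTensor V (LinearMap.mulLeft 𝔽 a))

/-- `(x⊗y⊗z) ⋆₁ b = x⊗(y*b)⊗z`. -/
noncomputable def slot2R (b : V) : (V ⊗[𝔽] V) ⊗[𝔽] V →ₗ[𝔽] (V ⊗[𝔽] V) ⊗[𝔽] V :=
  LinearMap.rTensor V (LinearMap.lTensor V (LinearMap.mulRight 𝔽 b))

/-- `a ⋆₂ (x⊗y⊗z) = x⊗y⊗(a*z)`. -/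
noncomputable def slot3L (a : V) : (V ⊗[𝔽] V) ⊗[𝔽] V →ₗ[𝔽] (V ⊗[𝔽] V) ⊗[𝔽] V :=
  LinearMap.lTensor (V ⊗[𝔽] V) (LinearMap.mulLeft 𝔽 a)

/-- `(x⊗y⊗z) ⋆₂ b = (x*b)⊗y⊗z`. -/
noncomputable def slot1R (b : V) : (V ⊗[𝔽] V) ⊗[𝔽] V →ₗ[𝔽] (V ⊗[𝔽] V) ⊗[𝔽] V :=
  LinearMap.rTensor V (LinearMap.rTensor V (LinearMap.mulRight 𝔽 b))

/-- outer left: `a · (x⊗y⊗z) = (a*x)⊗y⊗z`. -/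
noncomputable def slot1L (a : V) : (V ⊗[𝔽] V) ⊗[𝔽] V →ₗ[𝔽] (V ⊗[𝔽] V) ⊗[𝔽] V :=
  LinearMap.rTensor V (LinearMap.rTensor V (LinearMap.mulLeft 𝔽 a))

/-- outer right: `(x⊗y⊗z) · b = x⊗y⊗(z*b)`. -/
noncomputable def slot3R (b : V) : (V ⊗[𝔽] V) ⊗[𝔽] V →ₗ[𝔽] (V ⊗[𝔽] V) ⊗[𝔽] V :=
  LinearMap.lTensor (V ⊗[𝔽] V) (LinearMap.mulRight 𝔽 b)

variable {𝔽 V}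

/-- The triple bracket `{{a,b,c}}`. -/
noncomputable def triple (Br : V →ₗ[𝔽] V →ₗ[𝔽] V ⊗[𝔽] V) (a b c : V) :
    (V ⊗[𝔽] V) ⊗[𝔽] V :=
  brL Br a (Br b c) + sigma3 𝔽 V (brL Br b (Br c a)) +
    sigma3 𝔽 V (sigma3 𝔽 V (brL Br c (Br a b)))

variable (𝔽 V)

/-- Skewsymmetry of a 2-fold bracket. -/
def IsSkew (Br : V →ₗ[𝔽] V →ₗ[𝔽] V ⊗[𝔽] V) : Prop :=
  ∀ a b : V, Br a b = - swap2 𝔽 V (Br b a)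

/-- The span of commutators `[V,V]`. -/
def commSub : Submodule 𝔽 V := Submodule.span 𝔽 {x : V | ∃ a b : V, x = a * b - b * a}

variable {𝔽 V}

/-- The associated bracket `{a,b} = m {{a,b}}`. -/
noncomputable def sb (Br : V →ₗ[𝔽] V →ₗ[𝔽] V ⊗[𝔽] V) (a b : V) : V :=
  LinearMap.mul' 𝔽 V (Br a b)

/-- A 2-fold derivation: `D(ab) = (Da)·b + a·(Db)`. -/
def Is2Deriv (D : V →ₗ[𝔽] V ⊗[𝔽] V) : Prop :=
  ∀ a b : V, D (a * b) = ract2 𝔽 V b (D a) + lact2 𝔽 V a (D b)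

/-- `D` and `E` strongly commute: `D_L ∘ E = E_R ∘ D`. -/
def StronglyComm (D E : V →ₗ[𝔽] V ⊗[𝔽] V) : Prop :=
  ∀ f : V, LinearMap.rTensor V D (E f) =
    (TensorProduct.assoc 𝔽 V V V).symm (LinearMap.lTensor V E (D f))


/-- The master-formula bracket `{{f,g}} := Σ_{i,j} (D_j g) • B_{ij} • (D_i f)^σ`,
as a bundled bilinear map. -/
noncomputable def masterBr (𝔽 : Type) [Field 𝔽] (V : Type) [Ring V] [Algebra 𝔽 V]
    {ℓ : ℕ} (D : Fin ℓ → (V →ₗ[𝔽] V ⊗[𝔽] V)) (B : Fin ℓ → Fin ℓ → V ⊗[𝔽] V) :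
    V →ₗ[𝔽] V →ₗ[𝔽] V ⊗[𝔽] V :=
  ∑ i : Fin ℓ, ∑ j : Fin ℓ,
    (LinearMap.lcomp 𝔽 _ (((bullet 𝔽 V).flip (B i j)) ∘ₗ D j)) ∘ₗ
      (bullet 𝔽 V).flip ∘ₗ (swap2 𝔽 V).toLinearMap ∘ₗ D i

/-- `T_{ijk} := Σ_{h} ((D_h)_L B_{jk}) •₃ B_{ih}`. -/
noncomputable def Tjac (𝔽 : Type) [Field 𝔽] (V : Type) [Ring V] [Algebra 𝔽 V]
    {ℓ : ℕ} (D : Fin ℓ → (V →ₗ[𝔽] V ⊗[𝔽] V)) (B : Fin ℓ → Fin ℓ → V ⊗[𝔽] V)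
    (i j k : Fin ℓ) : (V ⊗[𝔽] V) ⊗[𝔽] V :=
  ∑ h : Fin ℓ, bAct3R 𝔽 V (B i h) (LinearMap.rTensor V (D h) (B j k))


section Lemmas
variable {𝔽 : Type} [Field 𝔽] {V : Type} [Ring V] [Algebra 𝔽 V]

@[simp] lemma bullet_tmul (a b c d : V) :
    bullet 𝔽 V (a ⊗ₜ[𝔽] b) (c ⊗ₜ[𝔽] d) = (a*c) ⊗ₜ[𝔽] (d*b) := by
  simp [bullet, TensorProduct.mapBilinear]

@[simp] lemma sigma3_tmul (a b c : V) :
    sigma3 𝔽 V ((a ⊗ₜ[𝔽] b) ⊗ₜ[𝔽] c) = (c ⊗ₜ[𝔽] a) ⊗ₜ[𝔽] b := by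
  simp [sigma3]

@[simp] lemma sigma3_symm_tmul (a b c : V) :
    (sigma3 𝔽 V).symm ((a ⊗ₜ[𝔽] b) ⊗ₜ[𝔽] c) = (b ⊗ₜ[𝔽] c) ⊗ₜ[𝔽] a := by
  simp [sigma3]

lemma conjAct_apply (β : V ⊗[𝔽] V →ₗ[𝔽] V ⊗[𝔽] V →ₗ[𝔽] V ⊗[𝔽] V)
    (ρ : (V ⊗[𝔽] V) ⊗[𝔽] V ≃ₗ[𝔽] (V ⊗[𝔽] V) ⊗[𝔽] V) (A : V ⊗[𝔽] V)
    (X : (V ⊗[𝔽] V) ⊗[𝔽] V) :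
    conjAct β ρ A X = ρ.symm (LinearMap.rTensor V (β A) (ρ X)) := rfl

@[simp] lemma bAct3R_tmul (a b x y z : V) :
    bAct3R 𝔽 V (a ⊗ₜ[𝔽] b) ((x ⊗ₜ[𝔽] y) ⊗ₜ[𝔽] z) = ((x*a) ⊗ₜ[𝔽] (b*y)) ⊗ₜ[𝔽] z := by
  simp [bAct3R, conjAct_apply]

@[simp] lemma bAct1R_tmul (a b x y z : V) :
    bAct1R 𝔽 V (a ⊗ₜ[𝔽] b) ((x ⊗ₜ[𝔽] y) ⊗ₜ[𝔽] z) = (x ⊗ₜ[𝔽] (y*a)) ⊗ₜ[𝔽] (b*z) := by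
  simp [bAct1R, conjAct_apply]

@[simp] lemma bAct2L_tmul (a b x y z : V) :
    bAct2L 𝔽 V (a ⊗ₜ[𝔽] b) ((x ⊗ₜ[𝔽] y) ⊗ₜ[𝔽] z) = ((a*x) ⊗ₜ[𝔽] y) ⊗ₜ[𝔽] (z*b) := by
  simp [bAct2L, conjAct_apply, rho2]

@[simp] lemma lact2_tmul (a u v : V) : lact2 𝔽 V a (u ⊗ₜ[𝔽] v) = (a*u) ⊗ₜ[𝔽] v := by
  simp [lact2]

@[simp] lemma ract2_tmul (c u v : V) : ract2 𝔽 V c (u ⊗ₜ[𝔽] v) = u ⊗ₜ[𝔽] (v*c) := by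
  simp [ract2]


-- convenient local abbreviations
variable (𝔽 V) in
noncomputable def Xi (t c s : V ⊗[𝔽] V) : V ⊗[𝔽] V :=
  bullet 𝔽 V (bullet 𝔽 V t c) (swap2 𝔽 V s)

variable (𝔽 V) in
noncomputable def theta (H : (V ⊗[𝔽] V) ⊗[𝔽] V) (b F : V ⊗[𝔽] V) : (V ⊗[𝔽] V) ⊗[𝔽] V :=
  bAct3R 𝔽 V (swap2 𝔽 V F) (bAct3R 𝔽 V b H)

section Base
variable (A A' X Y Z W t c s b F G : V ⊗[𝔽] V) (H K : (V ⊗[𝔽] V) ⊗[𝔽] V) (a r x y : V)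

lemma swap2_swap2 : swap2 𝔽 V (swap2 𝔽 V A) = A := by
  induction A using TensorProduct.induction_on with
  | zero => simp
  | add u v hu hv => simp [map_add, hu, hv]
  | tmul a b => simp

lemma swap2_bullet : swap2 𝔽 V (bullet 𝔽 V X Y) = bullet 𝔽 V (swap2 𝔽 V Y) (swap2 𝔽 V X) := by
  induction X using TensorProduct.induction_on with
  | zero => simp
  | add u v hu hv => simp [map_add, hu, hv]
  | tmul a b =>
    induction Y using TensorProduct.induction_on with
    | zero => simp
    | add u v hu hv => simp [map_add, hu, hv]
    | tmul c d => simp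

lemma sigma3_cube : sigma3 𝔽 V (sigma3 𝔽 V (sigma3 𝔽 V H)) = H := by
  induction H using TensorProduct.induction_on with
  | zero => simp
  | add u v hu hv => simp [map_add, hu, hv]
  | tmul w z =>
    induction w using TensorProduct.induction_on with
    | zero => simp
    | add u v hu hv => simp [add_tmul, map_add, hu, hv]
    | tmul a b => simp

lemma sigma3_bAct3R : sigma3 𝔽 V (bAct3R 𝔽 V A H) = bAct1R 𝔽 V A (sigma3 𝔽 V H) := by
  induction A using TensorProduct.induction_on with
  | zero => simp
  | add u v hu hv => simp [map_add, hu, hv]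
  | tmul a b =>
    induction H using TensorProduct.induction_on with
    | zero => simp
    | add u v hu hv => simp [map_add, hu, hv]
    | tmul w z =>
      induction w using TensorProduct.induction_on with
      | zero => simp
      | add u v hu hv => simp [add_tmul, map_add, hu, hv]
      | tmul p q => simp

lemma sigma3_bAct1R : sigma3 𝔽 V (bAct1R 𝔽 V A H) = bAct2L 𝔽 V (swap2 𝔽 V A) (sigma3 𝔽 V H) := by
  induction A using TensorProduct.induction_on with
  | zero => simp
  | add u v hu hv => simp [map_add, hu, hv]
  | tmul a b =>
    induction H using TensorProduct.induction_on with
    | zero => simp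
    | add u v hu hv => simp [map_add, hu, hv]
    | tmul w z =>
      induction w using TensorProduct.induction_on with
      | zero => simp
      | add u v hu hv => simp [add_tmul, map_add, hu, hv]
      | tmul p q => simp

lemma sigma3_bAct2L : sigma3 𝔽 V (bAct2L 𝔽 V A H) = bAct3R 𝔽 V (swap2 𝔽 V A) (sigma3 𝔽 V H) := by
  induction A using TensorProduct.induction_on with
  | zero => simp
  | add u v hu hv => simp [map_add, hu, hv]
  | tmul a b =>
    induction H using TensorProduct.induction_on with
    | zero => simp
    | add u v hu hv => simp [map_add, hu, hv]
    | tmul w z =>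
      induction w using TensorProduct.induction_on with
      | zero => simp
      | add u v hu hv => simp [add_tmul, map_add, hu, hv]
      | tmul p q => simp

lemma bAct1R_bAct2L : bAct1R 𝔽 V A (bAct2L 𝔽 V A' H) = bAct2L 𝔽 V A' (bAct1R 𝔽 V A H) := by
  induction A using TensorProduct.induction_on with
  | zero => simp
  | add u v hu hv => simp [map_add, hu, hv]
  | tmul a b =>
    induction A' using TensorProduct.induction_on with
    | zero => simp
    | add u v hu hv => simp [map_add, hu, hv]
    | tmul a' b' =>
      induction H using TensorProduct.induction_on with
      | zero => simp
      | add u v hu hv => simp [map_add, hu, hv]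
      | tmul w z =>
        induction w using TensorProduct.induction_on with
        | zero => simp
        | add u v hu hv => simp [add_tmul, map_add, hu, hv]
        | tmul p q => simp [mul_assoc]

lemma bAct1R_bAct3R : bAct1R 𝔽 V A (bAct3R 𝔽 V A' H) = bAct3R 𝔽 V A' (bAct1R 𝔽 V A H) := by
  induction A using TensorProduct.induction_on with
  | zero => simp
  | add u v hu hv => simp [map_add, hu, hv]
  | tmul a b =>
    induction A' using TensorProduct.induction_on with
    | zero => simp
    | add u v hu hv => simp [map_add, hu, hv]
    | tmul a' b' =>
      induction H using TensorProduct.induction_on with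
      | zero => simp
      | add u v hu hv => simp [map_add, hu, hv]
      | tmul w z =>
        induction w using TensorProduct.induction_on with
        | zero => simp
        | add u v hu hv => simp [add_tmul, map_add, hu, hv]
        | tmul p q => simp [mul_assoc]

lemma bAct2L_bAct3R : bAct2L 𝔽 V A (bAct3R 𝔽 V A' H) = bAct3R 𝔽 V A' (bAct2L 𝔽 V A H) := by
  induction A using TensorProduct.induction_on with
  | zero => simp
  | add u v hu hv => simp [map_add, hu, hv]
  | tmul a b =>
    induction A' using TensorProduct.induction_on with
    | zero => simp
    | add u v hu hv => simp [map_add, hu, hv]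
    | tmul a' b' =>
      induction H using TensorProduct.induction_on with
      | zero => simp
      | add u v hu hv => simp [map_add, hu, hv]
      | tmul w z =>
        induction w using TensorProduct.induction_on with
        | zero => simp
        | add u v hu hv => simp [add_tmul, map_add, hu, hv]
        | tmul p q => simp [mul_assoc]

lemma bAct1R_bAct1R : bAct1R 𝔽 V A' (bAct1R 𝔽 V A H) = bAct1R 𝔽 V (bullet 𝔽 V A A') H := by
  induction A using TensorProduct.induction_on with
  | zero => simp
  | add u v hu hv => simp [map_add, hu, hv]
  | tmul a b =>
    induction A' using TensorProduct.induction_on with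
    | zero => simp
    | add u v hu hv => simp [map_add, hu, hv]
    | tmul a' b' =>
      induction H using TensorProduct.induction_on with
      | zero => simp
      | add u v hu hv => simp [map_add, hu, hv]
      | tmul w z =>
        induction w using TensorProduct.induction_on with
        | zero => simp
        | add u v hu hv => simp [add_tmul, map_add, hu, hv]
        | tmul p q => simp [mul_assoc]

lemma bAct3R_bAct3R : bAct3R 𝔽 V A' (bAct3R 𝔽 V A H) = bAct3R 𝔽 V (bullet 𝔽 V A A') H := by
  induction A using TensorProduct.induction_on with
  | zero => simp
  | add u v hu hv => simp [map_add, hu, hv]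
  | tmul a b =>
    induction A' using TensorProduct.induction_on with
    | zero => simp
    | add u v hu hv => simp [map_add, hu, hv]
    | tmul a' b' =>
      induction H using TensorProduct.induction_on with
      | zero => simp
      | add u v hu hv => simp [map_add, hu, hv]
      | tmul w z =>
        induction w using TensorProduct.induction_on with
        | zero => simp
        | add u v hu hv => simp [add_tmul, map_add, hu, hv]
        | tmul p q => simp [mul_assoc]

lemma bAct3R_tmulW : bAct3R 𝔽 V A (W ⊗ₜ[𝔽] r) = (bullet 𝔽 V W A) ⊗ₜ[𝔽] r := by
  induction A using TensorProduct.induction_on with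
  | zero => simp
  | add u v hu hv => simp [map_add, hu, hv, add_tmul]
  | tmul a b =>
    induction W using TensorProduct.induction_on with
    | zero => simp
    | add u v hu hv => simp [add_tmul, map_add, hu, hv]
    | tmul p q => simp

lemma bAct1R_tmulW : bAct1R 𝔽 V (a ⊗ₜ[𝔽] x) (Z ⊗ₜ[𝔽] r) = (ract2 𝔽 V a Z) ⊗ₜ[𝔽] (x*r) := by
  induction Z using TensorProduct.induction_on with
  | zero => simp
  | add u v hu hv => simp [add_tmul, map_add, hu, hv]
  | tmul p q => simp

lemma bAct2L_tmulW : bAct2L 𝔽 V (a ⊗ₜ[𝔽] x) (Z ⊗ₜ[𝔽] r) = (lact2 𝔽 V a Z) ⊗ₜ[𝔽] (r*x) := by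
  induction Z using TensorProduct.induction_on with
  | zero => simp
  | add u v hu hv => simp [add_tmul, map_add, hu, hv]
  | tmul p q => simp

lemma sigma_sigma_assoc (P : V ⊗[𝔽] V) (x : V) :
    sigma3 𝔽 V (sigma3 𝔽 V ((TensorProduct.assoc 𝔽 V V V).symm (x ⊗ₜ[𝔽] P))) = P ⊗ₜ[𝔽] x := by
  induction P using TensorProduct.induction_on with
  | zero => rw [tmul_zero, zero_tmul, LinearEquiv.map_zero, LinearEquiv.map_zero, LinearEquiv.map_zero]
  | add u v hu hv => simp [tmul_add, add_tmul, map_add, hu, hv]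
  | tmul p q => simp

lemma ract2_ract2 : ract2 𝔽 V a (ract2 𝔽 V r Z) = ract2 𝔽 V (r*a) Z := by
  induction Z using TensorProduct.induction_on with
  | zero => simp
  | add u v hu hv => simp [map_add, hu, hv]
  | tmul p q => simp [mul_assoc]

lemma lact2_lact2 : lact2 𝔽 V a (lact2 𝔽 V r Z) = lact2 𝔽 V (a*r) Z := by
  induction Z using TensorProduct.induction_on with
  | zero => simp
  | add u v hu hv => simp [map_add, hu, hv]
  | tmul p q => simp [mul_assoc]

lemma lact2_ract2 : lact2 𝔽 V a (ract2 𝔽 V r Z) = ract2 𝔽 V r (lact2 𝔽 V a Z) := by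
  induction Z using TensorProduct.induction_on with
  | zero => simp
  | add u v hu hv => simp [map_add, hu, hv]
  | tmul p q => simp

lemma bullet_ract2 : bullet 𝔽 V (ract2 𝔽 V r W) Y = ract2 𝔽 V r (bullet 𝔽 V W Y) := by
  induction Y using TensorProduct.induction_on with
  | zero => simp
  | add u v hu hv => simp only [map_add, hu, hv]
  | tmul c d =>
    induction W using TensorProduct.induction_on with
    | zero => simp
    | add u v hu hv => simp only [map_add, LinearMap.add_apply, hu, hv]
    | tmul p q => simp [mul_assoc]

lemma bullet_lact2 : bullet 𝔽 V (lact2 𝔽 V a W) Y = lact2 𝔽 V a (bullet 𝔽 V W Y) := by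
  induction Y using TensorProduct.induction_on with
  | zero => simp
  | add u v hu hv => simp only [map_add, hu, hv]
  | tmul c d =>
    induction W using TensorProduct.induction_on with
    | zero => simp
    | add u v hu hv => simp only [map_add, LinearMap.add_apply, hu, hv]
    | tmul p q => simp [mul_assoc]

lemma bullet_assoc : bullet 𝔽 V (bullet 𝔽 V X Y) Z = bullet 𝔽 V X (bullet 𝔽 V Y Z) := by
  induction X using TensorProduct.induction_on with
  | zero => simp
  | add u v hu hv => simp only [map_add, LinearMap.add_apply, hu, hv]
  | tmul a b =>
    induction Y using TensorProduct.induction_on with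
    | zero => simp
    | add u v hu hv => simp only [map_add, LinearMap.add_apply, hu, hv]
    | tmul c d =>
      induction Z using TensorProduct.induction_on with
      | zero => simp
      | add u v hu hv => simp only [map_add, hu, hv]
      | tmul e f => simp [mul_assoc]

lemma Xi_skew : Xi 𝔽 V t c s = swap2 𝔽 V (Xi 𝔽 V s (swap2 𝔽 V c) t) := by
  unfold Xi
  rw [swap2_bullet, swap2_bullet, swap2_swap2, swap2_swap2, bullet_assoc]

end Base

section Mid
variable (t t' c c' s s' b F G A : V ⊗[𝔽] V) (K K' H : (V ⊗[𝔽] V) ⊗[𝔽] V) (a r : V)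

@[simp] lemma Xi_add1 : Xi 𝔽 V (t+t') c s = Xi 𝔽 V t c s + Xi 𝔽 V t' c s := by
  simp [Xi, map_add]
@[simp] lemma Xi_add2 : Xi 𝔽 V t (c+c') s = Xi 𝔽 V t c s + Xi 𝔽 V t c' s := by
  simp [Xi, map_add]
@[simp] lemma Xi_add3 : Xi 𝔽 V t c (s+s') = Xi 𝔽 V t c s + Xi 𝔽 V t c s' := by
  simp [Xi, map_add]
@[simp] lemma Xi_zero1 : Xi 𝔽 V 0 c s = 0 := by simp [Xi]
@[simp] lemma Xi_zero2 : Xi 𝔽 V t 0 s = 0 := by simp [Xi]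
@[simp] lemma Xi_zero3 : Xi 𝔽 V t c 0 = 0 := by simp [Xi]
@[simp] lemma Xi_neg2 : Xi 𝔽 V t (-c) s = - Xi 𝔽 V t c s := by simp [Xi, map_neg]

@[simp] lemma theta_add1 : theta 𝔽 V (K+K') b F = theta 𝔽 V K b F + theta 𝔽 V K' b F := by
  simp [theta, map_add]
@[simp] lemma theta_add2 : theta 𝔽 V K (b+c) F = theta 𝔽 V K b F + theta 𝔽 V K c F := by
  simp [theta, map_add]
@[simp] lemma theta_add3 : theta 𝔽 V K b (F+G) = theta 𝔽 V K b F + theta 𝔽 V K b G := by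
  simp [theta, map_add]
@[simp] lemma theta_zero1 : theta 𝔽 V 0 b F = 0 := by simp [theta]
@[simp] lemma theta_zero2 : theta 𝔽 V K 0 F = 0 := by simp [theta]
@[simp] lemma theta_zero3 : theta 𝔽 V K b 0 = 0 := by simp [theta]

lemma theta_tmulW (W : V ⊗[𝔽] V) : theta 𝔽 V (W ⊗ₜ[𝔽] r) b F = (Xi 𝔽 V W b F) ⊗ₜ[𝔽] r := by
  rw [theta, bAct3R_tmulW, bAct3R_tmulW]; rfl

lemma Xi_ract2 : Xi 𝔽 V (ract2 𝔽 V r t) c s = ract2 𝔽 V r (Xi 𝔽 V t c s) := by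
  rw [Xi, Xi, bullet_ract2, bullet_ract2]

lemma Xi_lact2 : Xi 𝔽 V (lact2 𝔽 V a t) c s = lact2 𝔽 V a (Xi 𝔽 V t c s) := by
  rw [Xi, Xi, bullet_lact2, bullet_lact2]

@[simp] lemma Xi_tmul (u v c1 c2 x y : V) :
    Xi 𝔽 V (u ⊗ₜ[𝔽] v) (c1 ⊗ₜ[𝔽] c2) (x ⊗ₜ[𝔽] y) = (u*(c1*y)) ⊗ₜ[𝔽] (x*(c2*v)) := by
  simp [Xi, mul_assoc]

end Mid

section Master
variable {ℓ : ℕ} (D : Fin ℓ → (V →ₗ[𝔽] V ⊗[𝔽] V)) (B : Fin ℓ → Fin ℓ → V ⊗[𝔽] V)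

lemma masterBr_apply (f g : V) :
    masterBr 𝔽 V D B f g = ∑ i : Fin ℓ, ∑ j : Fin ℓ, Xi 𝔽 V (D j g) (B i j) (D i f) := by
  simp [masterBr, Xi, LinearMap.sum_apply]

lemma master_skew (hBskew : ∀ i j, B i j = - swap2 𝔽 V (B j i)) :
    IsSkew 𝔽 V (masterBr 𝔽 V D B) := by
  intro f g
  rw [masterBr_apply, masterBr_apply]
  have step : ∀ i j, Xi 𝔽 V (D j g) (B i j) (D i f)
      = - swap2 𝔽 V (Xi 𝔽 V (D i f) (B j i) (D j g)) := by
    intro i j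
    rw [Xi_skew, hBskew i j]
    simp [map_neg, swap2_swap2]
  calc (∑ i, ∑ j, Xi 𝔽 V (D j g) (B i j) (D i f))
      = ∑ i, ∑ j, - swap2 𝔽 V (Xi 𝔽 V (D i f) (B j i) (D j g)) := by
        exact Finset.sum_congr rfl fun i _ => Finset.sum_congr rfl fun j _ => step i j
    _ = - swap2 𝔽 V (∑ i, ∑ j, Xi 𝔽 V (D i f) (B j i) (D j g)) := by
        simp [map_sum, Finset.sum_neg_distrib]
    _ = - swap2 𝔽 V (∑ i, ∑ j, Xi 𝔽 V (D j f) (B i j) (D i g)) := by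
        rw [Finset.sum_comm]


private lemma sum2_add {M : Type} [AddCommMonoid M] {n : ℕ} (f g : Fin n → Fin n → M) :
    (∑ k, ∑ l, f k l) + (∑ k, ∑ l, g k l) = ∑ k, ∑ l, (f k l + g k l) := by
  rw [← Finset.sum_add_distrib]
  exact Finset.sum_congr rfl fun k _ => (Finset.sum_add_distrib).symm

lemma EXP (hD' : ∀ i (a b : V), D i (a*b) = ract2 𝔽 V b (D i a) + lact2 𝔽 V a (D i b))
    (f : V) (t c s : V ⊗[𝔽] V) :
    LinearMap.rTensor V (masterBr 𝔽 V D B f) (Xi 𝔽 V t c s) =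
    ∑ k : Fin ℓ, ∑ l : Fin ℓ,
      (bAct1R 𝔽 V (bullet 𝔽 V c (swap2 𝔽 V s))
          (theta 𝔽 V (LinearMap.rTensor V (D l) t) (B k l) (D k f))
      + bAct2L 𝔽 V (bullet 𝔽 V t c)
          (theta 𝔽 V (sigma3 𝔽 V (sigma3 𝔽 V
            ((TensorProduct.assoc 𝔽 V V V).symm (LinearMap.lTensor V (D l) s))))
            (B k l) (D k f))
      + bAct1R 𝔽 V (swap2 𝔽 V s)
          (bAct2L 𝔽 V t (theta 𝔽 V (LinearMap.rTensor V (D l) c) (B k l) (D k f)))) := by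
  induction t using TensorProduct.induction_on with
  | zero => simp
  | add u v hu hv =>
    simp only [map_add, theta_add1, LinearMap.add_apply, Xi_add1, hu, hv, sum2_add]
    exact Finset.sum_congr rfl fun k _ => Finset.sum_congr rfl fun l _ => by abel
  | tmul u v =>
  induction c using TensorProduct.induction_on with
  | zero => simp
  | add u' v' hu hv =>
    simp only [map_add, theta_add1, LinearMap.add_apply, Xi_add2, hu, hv, sum2_add]
    exact Finset.sum_congr rfl fun k _ => Finset.sum_congr rfl fun l _ => by abel
  | tmul c1 c2 =>
  induction s using TensorProduct.induction_on with
  | zero => simp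
  | add u' v' hu hv =>
    simp only [map_add, theta_add1, LinearMap.add_apply, Xi_add3, hu, hv, sum2_add]
    exact Finset.sum_congr rfl fun k _ => Finset.sum_congr rfl fun l _ => by abel
  | tmul x y =>
    simp only [Xi_tmul, LinearMap.rTensor_tmul, LinearMap.lTensor_tmul,
      masterBr_apply D B, hD', TensorProduct.comm_tmul, bullet_tmul,
      theta_tmulW, sigma_sigma_assoc, bAct1R_tmulW, bAct2L_tmulW,
      Xi_add1, Xi_ract2, Xi_lact2, map_add, map_sum, LinearMap.add_apply,
      TensorProduct.sum_tmul, TensorProduct.add_tmul,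
      ract2_ract2, lact2_lact2, lact2_ract2, mul_assoc]
    exact Finset.sum_congr rfl fun k _ => Finset.sum_congr rfl fun l _ => by abel


variable {D} {B} in
noncomputable def TermI (f g h : V) (i j k l : Fin ℓ) : (V ⊗[𝔽] V) ⊗[𝔽] V :=
  bAct1R 𝔽 V (bullet 𝔽 V (B i j) (swap2 𝔽 V (D i g)))
    (theta 𝔽 V (LinearMap.rTensor V (D l) (D j h)) (B k l) (D k f))

variable {D} {B} in
noncomputable def TermII (f g h : V) (i j k l : Fin ℓ) : (V ⊗[𝔽] V) ⊗[𝔽] V :=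
  bAct2L 𝔽 V (bullet 𝔽 V (D j h) (B i j))
    (theta 𝔽 V (sigma3 𝔽 V (sigma3 𝔽 V
        ((TensorProduct.assoc 𝔽 V V V).symm (LinearMap.lTensor V (D l) (D i g)))))
      (B k l) (D k f))

variable {D} {B} in
noncomputable def TermIII (f g h : V) (i j k l : Fin ℓ) : (V ⊗[𝔽] V) ⊗[𝔽] V :=
  bAct1R 𝔽 V (swap2 𝔽 V (D i g))
    (bAct2L 𝔽 V (D j h) (theta 𝔽 V (LinearMap.rTensor V (D l) (B i j)) (B k l) (D k f)))

lemma EXPAND (hD' : ∀ i (a b : V), D i (a*b) = ract2 𝔽 V b (D i a) + lact2 𝔽 V a (D i b))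
    (f g h : V) :
    brL (masterBr 𝔽 V D B) f (masterBr 𝔽 V D B g h) =
    ∑ i : Fin ℓ, ∑ j : Fin ℓ, ∑ k : Fin ℓ, ∑ l : Fin ℓ,
      (TermI (D := D) (B := B) f g h i j k l + TermII (D := D) (B := B) f g h i j k l
        + TermIII (D := D) (B := B) f g h i j k l) := by
  rw [masterBr_apply D B g h]
  unfold brL
  rw [map_sum]
  refine Finset.sum_congr rfl fun i _ => ?_
  rw [map_sum]
  refine Finset.sum_congr rfl fun j _ => ?_
  rw [EXP D B hD' f (D j h) (B i j) (D i g)]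
  rfl

-- the key pointwise cancellation
lemma PT (K : (V ⊗[𝔽] V) ⊗[𝔽] V) (b c F G : V ⊗[𝔽] V) :
    bAct1R 𝔽 V (bullet 𝔽 V c (swap2 𝔽 V G)) (theta 𝔽 V K b F)
    + sigma3 𝔽 V (bAct2L 𝔽 V (bullet 𝔽 V F (-(swap2 𝔽 V b)))
        (theta 𝔽 V (sigma3 𝔽 V (sigma3 𝔽 V K)) c G)) = 0 := by
  have h1 : theta 𝔽 V K b F = bAct3R 𝔽 V (bullet 𝔽 V b (swap2 𝔽 V F)) K := by
    rw [theta, bAct3R_bAct3R]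
  have h2 : sigma3 𝔽 V (bAct2L 𝔽 V (bullet 𝔽 V F (-(swap2 𝔽 V b)))
      (theta 𝔽 V (sigma3 𝔽 V (sigma3 𝔽 V K)) c G))
      = - bAct3R 𝔽 V (bullet 𝔽 V b (swap2 𝔽 V F))
          (bAct1R 𝔽 V (bullet 𝔽 V c (swap2 𝔽 V G)) K) := by
    rw [sigma3_bAct2L, swap2_bullet, map_neg, swap2_swap2]
    rw [theta, sigma3_bAct3R, sigma3_bAct3R, sigma3_cube, bAct1R_bAct1R]
    simp [map_neg]
  rw [h1, h2, bAct1R_bAct3R]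
  abel


private lemma sum3_add {M : Type} [AddCommMonoid M] {n : ℕ} (f g : Fin n → Fin n → Fin n → M) :
    (∑ i, ∑ j, ∑ k, f i j k) + (∑ i, ∑ j, ∑ k, g i j k)
      = ∑ i, ∑ j, ∑ k, (f i j k + g i j k) := by
  rw [← Finset.sum_add_distrib]
  exact Finset.sum_congr rfl fun i _ => sum2_add _ _

private lemma sum4_add {M : Type} [AddCommMonoid M] {n : ℕ}
    (f g : Fin n → Fin n → Fin n → Fin n → M) :
    (∑ i, ∑ j, ∑ k, ∑ l, f i j k l) + (∑ i, ∑ j, ∑ k, ∑ l, g i j k l)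
      = ∑ i, ∑ j, ∑ k, ∑ l, (f i j k l + g i j k l) := by
  rw [← Finset.sum_add_distrib]
  exact Finset.sum_congr rfl fun i _ => sum3_add _ _

private lemma sum4_key {M : Type} [AddCommMonoid M] {n : ℕ}
    (G : Fin n → Fin n → Fin n → Fin n → M) :
    (∑ i, ∑ j, ∑ k, ∑ l, G i j k l)
      = ∑ p : Fin n × Fin n × Fin n × Fin n, G p.1 p.2.1 p.2.2.1 p.2.2.2 := by
  rw [Fintype.sum_prod_type]
  refine Finset.sum_congr rfl fun i _ => ?_
  rw [Fintype.sum_prod_type]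
  refine Finset.sum_congr rfl fun j _ => ?_
  rw [Fintype.sum_prod_type]

private lemma sum4_perm {M : Type} [AddCommMonoid M] {n : ℕ}
    (F : Fin n → Fin n → Fin n → Fin n → M) :
    (∑ i, ∑ j, ∑ k, ∑ l, F i j k l) = ∑ i, ∑ j, ∑ k, ∑ l, F l k i j := by
  rw [sum4_key F, sum4_key (fun i j k l => F l k i j)]
  exact Fintype.sum_equiv
    ⟨fun p => (p.2.2.1, p.2.2.2, p.2.1, p.1), fun q => (q.2.2.2, q.2.2.1, q.1, q.2.1),
      fun ⟨i, j, k, l⟩ => rfl, fun ⟨i, j, k, l⟩ => rfl⟩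
    _ _ (fun ⟨i, j, k, l⟩ => rfl)

private lemma sum3_key {M : Type} [AddCommMonoid M] {n : ℕ}
    (G : Fin n → Fin n → Fin n → M) :
    (∑ i, ∑ j, ∑ k, G i j k) = ∑ p : Fin n × Fin n × Fin n, G p.1 p.2.1 p.2.2 := by
  rw [Fintype.sum_prod_type]
  refine Finset.sum_congr rfl fun i _ => ?_
  rw [Fintype.sum_prod_type]

private lemma sum3_cycle {M : Type} [AddCommMonoid M] {n : ℕ}
    (F : Fin n → Fin n → Fin n → M) :
    (∑ i, ∑ j, ∑ k, F i j k) = ∑ i, ∑ j, ∑ k, F j k i := by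
  rw [sum3_key F, sum3_key (fun i j k => F j k i)]
  exact Fintype.sum_equiv
    ⟨fun p => (p.2.2, p.1, p.2.1), fun q => (q.2.1, q.2.2, q.1),
      fun ⟨i, j, k⟩ => rfl, fun ⟨i, j, k⟩ => rfl⟩
    _ _ (fun ⟨i, j, k⟩ => rfl)

private lemma sum3_cycle2 {M : Type} [AddCommMonoid M] {n : ℕ}
    (F : Fin n → Fin n → Fin n → M) :
    (∑ i, ∑ j, ∑ k, F i j k) = ∑ i, ∑ j, ∑ k, F k i j := by
  rw [sum3_cycle F, sum3_cycle (fun i j k => F j k i)]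

lemma C1 (hcomm : ∀ i j, StronglyComm (D i) (D j))
    (hBskew : ∀ i j, B i j = - swap2 𝔽 V (B j i)) (f g h : V) :
    (∑ i : Fin ℓ, ∑ j : Fin ℓ, ∑ k : Fin ℓ, ∑ l : Fin ℓ, TermI (D := D) (B := B) f g h i j k l)
    + sigma3 𝔽 V (∑ i : Fin ℓ, ∑ j : Fin ℓ, ∑ k : Fin ℓ, ∑ l : Fin ℓ,
        TermII (D := D) (B := B) g h f i j k l) = 0 := by
  simp only [map_sum]
  rw [sum4_perm (fun i j k l => sigma3 𝔽 V (TermII (D := D) (B := B) g h f i j k l))]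
  rw [sum4_add]
  have key : ∀ i j k l : Fin ℓ,
      TermI (D := D) (B := B) f g h i j k l
        + sigma3 𝔽 V (TermII (D := D) (B := B) g h f l k i j) = 0 := by
    intro i j k l
    unfold TermI TermII
    rw [← hcomm l j h, hBskew l k]
    exact PT _ _ _ _ _
  simp only [key, Finset.sum_const_zero]

variable (𝔽 V) in
noncomputable def DecT (F G H : V ⊗[𝔽] V) (X : (V ⊗[𝔽] V) ⊗[𝔽] V) : (V ⊗[𝔽] V) ⊗[𝔽] V :=
  bAct1R 𝔽 V (swap2 𝔽 V G) (bAct2L 𝔽 V H (bAct3R 𝔽 V (swap2 𝔽 V F) X))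

lemma DecT_sigma (F G H : V ⊗[𝔽] V) (X : (V ⊗[𝔽] V) ⊗[𝔽] V) :
    sigma3 𝔽 V (DecT 𝔽 V F G H X) = DecT 𝔽 V H F G (sigma3 𝔽 V X) := by
  unfold DecT
  rw [sigma3_bAct1R, swap2_swap2, sigma3_bAct2L, sigma3_bAct3R, ← bAct1R_bAct3R,
    bAct1R_bAct2L]

lemma DecT_add (F G H : V ⊗[𝔽] V) (X Y : (V ⊗[𝔽] V) ⊗[𝔽] V) :
    DecT 𝔽 V F G H (X + Y) = DecT 𝔽 V F G H X + DecT 𝔽 V F G H Y := by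
  simp [DecT, map_add]

lemma DecT_zero (F G H : V ⊗[𝔽] V) : DecT 𝔽 V F G H 0 = 0 := by simp [DecT]

lemma TermIII_l_sum (f g h : V) (i j k : Fin ℓ) :
    (∑ l : Fin ℓ, TermIII (D := D) (B := B) f g h i j k l)
      = DecT 𝔽 V (D k f) (D i g) (D j h) (Tjac 𝔽 V D B k i j) := by
  unfold TermIII DecT theta Tjac
  rw [← map_sum, ← map_sum, ← map_sum]

lemma C4 (hBjac : ∀ i j k, Tjac 𝔽 V D B i j k + sigma3 𝔽 V (Tjac 𝔽 V D B j k i)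
      + sigma3 𝔽 V (sigma3 𝔽 V (Tjac 𝔽 V D B k i j)) = 0) (f g h : V) :
    (∑ i : Fin ℓ, ∑ j : Fin ℓ, ∑ k : Fin ℓ, ∑ l : Fin ℓ, TermIII (D := D) (B := B) f g h i j k l)
    + sigma3 𝔽 V (∑ i : Fin ℓ, ∑ j : Fin ℓ, ∑ k : Fin ℓ, ∑ l : Fin ℓ,
        TermIII (D := D) (B := B) g h f i j k l)
    + sigma3 𝔽 V (sigma3 𝔽 V (∑ i : Fin ℓ, ∑ j : Fin ℓ, ∑ k : Fin ℓ, ∑ l : Fin ℓ,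
        TermIII (D := D) (B := B) h f g i j k l)) = 0 := by
  have base : ∀ x y z : V,
      (∑ i : Fin ℓ, ∑ j : Fin ℓ, ∑ k : Fin ℓ, ∑ l : Fin ℓ,
          TermIII (D := D) (B := B) x y z i j k l)
        = ∑ i : Fin ℓ, ∑ j : Fin ℓ, ∑ k : Fin ℓ,
            DecT 𝔽 V (D k x) (D i y) (D j z) (Tjac 𝔽 V D B k i j) :=
    fun x y z => Finset.sum_congr rfl fun i _ => Finset.sum_congr rfl fun j _ =>
      Finset.sum_congr rfl fun k _ => TermIII_l_sum D B x y z i j k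
  rw [base f g h, base g h f, base h f g]
  simp only [map_sum, DecT_sigma]
  rw [sum3_cycle (fun i j k => DecT 𝔽 V (D j f) (D k g) (D i h)
        (sigma3 𝔽 V (Tjac 𝔽 V D B k i j)))]
  rw [sum3_cycle2 (fun i j k => DecT 𝔽 V (D i f) (D j g) (D k h)
        (sigma3 𝔽 V (sigma3 𝔽 V (Tjac 𝔽 V D B k i j))))]
  rw [sum3_add, sum3_add]
  have key : ∀ i j k : Fin ℓ,
      DecT 𝔽 V (D k f) (D i g) (D j h) (Tjac 𝔽 V D B k i j)
      + DecT 𝔽 V (D k f) (D i g) (D j h) (sigma3 𝔽 V (Tjac 𝔽 V D B i j k))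
      + DecT 𝔽 V (D k f) (D i g) (D j h) (sigma3 𝔽 V (sigma3 𝔽 V (Tjac 𝔽 V D B j k i)))
      = 0 := by
    intro i j k
    rw [← DecT_add, ← DecT_add, hBjac k i j, DecT_zero]
  simp only [key, Finset.sum_const_zero]

end Master
end Lemmas

/-- master formula with strongly commuting 2-fold derivations,
skewsymmetric `B` and Jacobi identity on generators gives a double Poisson algebra. -/
theorem statement_12 (𝔽 : Type) [Field 𝔽] [CharZero 𝔽] (V : Type) [Ring V] [Algebra 𝔽 V]
    {ℓ : ℕ} (D : Fin ℓ → (V →ₗ[𝔽] V ⊗[𝔽] V)) (hD : ∀ i, Is2Deriv (D i))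
    (hcomm : ∀ i j, StronglyComm (D i) (D j))
    (B : Fin ℓ → Fin ℓ → V ⊗[𝔽] V)
    (hBskew : ∀ i j, B i j = - swap2 𝔽 V (B j i))
    (hBjac : ∀ i j k, Tjac 𝔽 V D B i j k + sigma3 𝔽 V (Tjac 𝔽 V D B j k i)
      + sigma3 𝔽 V (sigma3 𝔽 V (Tjac 𝔽 V D B k i j)) = 0) :
    IsSkew 𝔽 V (masterBr 𝔽 V D B) ∧
    (∀ f g h : V, triple (masterBr 𝔽 V D B) f g h = 0) := by
  constructor
  · exact master_skew D B hBskew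
  · intro f g h
    have h1 := C1 D B hcomm hBskew f g h
    have h2 := C1 D B hcomm hBskew g h f
    have h3 := C1 D B hcomm hBskew h f g
    have h4 := C4 D B hBjac f g h
    have h2' := congrArg (sigma3 𝔽 V) h2
    rw [map_add, map_zero] at h2'
    have h3' := congrArg (fun X => sigma3 𝔽 V (sigma3 𝔽 V X)) h3
    simp only [map_add, map_zero, sigma3_cube] at h3'
    unfold triple
    rw [EXPAND D B (fun i a b => hD i a b) f g h,
      EXPAND D B (fun i a b => hD i a b) g h f,
      EXPAND D B (fun i a b => hD i a b) h f g]
    simp only [Finset.sum_add_distrib, map_add]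
    have G := congrArg₂ (· + ·) (congrArg₂ (· + ·) (congrArg₂ (· + ·) h1 h2') h3') h4
    simp only [add_zero] at G
    rw [← G]
    abel
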